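/- arXiv:1803.03938 — 7 statements merged into one kernel-verified Lean document; each statement's English description precedes it below -/
import Mathlib

section
/- Write X(1,e₂,e₃) = Σ_{k=1}^n V_k·I_k with V_k ∈ ℂ. Then for each u ∈ {1,…,m}, X(I_u, e₂·I_u, e₃·I_u) = V_u·I_u + Σ_{s} V_s·I_s, where the sum runs over those s ∈ {m+1,…,n} with I_u·I_s = I_s. Consequently X(I_u, e₂·I_u, e₃·I_u) = 0 if and only if V_u = 0 and V_s = 0 for every s ∈ {m+1,…,n} with I_u·I_s = I_s; that is, the characteristic system generated by X(I_u, e₂·I_u, e₃·I_u) = 0 is a subsystem (reduction) of the characteristic system {V_1 = 0, …, V_n = 0} generated by X(1,e₂,e₃) = 0. -/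
open scoped Classical

/-- The characteristic polynomial `X(g₁,g₂,g₃) = Σ_{α+β+γ=N} C_{α,β,γ} g₁^α g₂^β g₃^γ`. -/
def charPoly {A : Type} [CommRing A] [Algebra ℂ A] (N : ℕ) (C : ℕ → ℕ → ℕ → ℂ)
    (g₁ g₂ g₃ : A) : A :=
  ∑ p ∈ (Finset.range (N + 1) ×ˢ Finset.range (N + 1) ×ˢ Finset.range (N + 1)).filter
      (fun p => p.1 + p.2.1 + p.2.2 = N),
    C p.1 p.2.1 p.2.2 • (g₁ ^ p.1 * g₂ ^ p.2.1 * g₃ ^ p.2.2)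

theorem stmt2
    (n m : ℕ) (hm : 1 ≤ m) (hmn : m ≤ n)
    (A : Type) [CommRing A] [Algebra ℂ A]
    (I : Fin n → A) (bI : Module.Basis (Fin n) ℂ A) (hbI : ∀ k, bI k = I k)
    (h1 : ∀ r s : Fin n, (r : ℕ) < m → (s : ℕ) < m →
      I r * I s = if r = s then I r else 0)
    (h2 : ∀ r s : Fin n, m ≤ (r : ℕ) → m ≤ (s : ℕ) →
      I r * I s ∈ Submodule.span ℂ (I '' {k : Fin n | max (r : ℕ) (s : ℕ) < (k : ℕ)}))
    (h3 : ∀ s : Fin n, m ≤ (s : ℕ) → ∃ u : Fin n, (u : ℕ) < m ∧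
      I u * I s = I s ∧ ∀ r : Fin n, (r : ℕ) < m → r ≠ u → I r * I s = 0)
    (N : ℕ) (hN : 1 ≤ N) (C : ℕ → ℕ → ℕ → ℂ)
    (a b : Fin n → ℂ) (e₂ e₃ : A)
    (he₂ : e₂ = ∑ r, a r • I r) (he₃ : e₃ = ∑ r, b r • I r)
    (V : Fin n → ℂ) (hV : charPoly N C 1 e₂ e₃ = ∑ k, V k • I k)
    (u : Fin n) (hu : (u : ℕ) < m) :
    charPoly N C (I u) (e₂ * I u) (e₃ * I u) =
        V u • I u +
          ∑ s ∈ Finset.univ.filter (fun s : Fin n => m ≤ (s : ℕ) ∧ I u * I s = I s),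
            V s • I s ∧
      (charPoly N C (I u) (e₂ * I u) (e₃ * I u) = 0 ↔
        V u = 0 ∧ ∀ s : Fin n, m ≤ (s : ℕ) → I u * I s = I s → V s = 0) := by
  classical
  set F : Finset (Fin n) :=
    Finset.univ.filter (fun s : Fin n => m ≤ (s : ℕ) ∧ I u * I s = I s) with hF
  have hIuu : I u * I u = I u := by simpa using h1 u u hu hu
  have hpow : ∀ k : ℕ, 1 ≤ k → I u ^ k = I u := by
    intro k hk
    induction k with
    | zero => omega
    | succ k ih =>
      rcases Nat.eq_zero_or_pos k with h | h
      · simp [h]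
      · rw [pow_succ, ih h, hIuu]
  have hne : ∀ k, I k ≠ 0 := fun k => by rw [← hbI k]; exact bI.ne_zero k
  have huF : u ∉ F := by
    simp only [hF, Finset.mem_filter, Finset.mem_univ, true_and]
    intro h
    omega
  have hmul : ∀ k, I k * I u = if k ∈ insert u F then I k else 0 := by
    intro k
    by_cases hkm : (k : ℕ) < m
    · by_cases hk : k = u
      · subst hk
        simp [hIuu, Finset.mem_insert]
      · have h0 : I k * I u = 0 := by
          rw [h1 k u hkm hu, if_neg hk]
        have hkF : k ∉ F := by
          simp only [hF, Finset.mem_filter, Finset.mem_univ, true_and]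
          intro h
          omega
        rw [h0, if_neg (by simp [Finset.mem_insert, hk, hkF])]
    · have hmk : m ≤ (k : ℕ) := le_of_not_gt hkm
      have hku : k ≠ u := fun h => hkm (h ▸ hu)
      obtain ⟨u', hu', hIu'k, hother⟩ := h3 k hmk
      by_cases huu' : u = u'
      · subst huu'
        have hkF : k ∈ insert u F := by
          simp [Finset.mem_insert, hF, Finset.mem_filter, hmk, hIu'k]
        rw [mul_comm, hIu'k, if_pos hkF]
      · have h0 : I u * I k = 0 := hother u hu huu'
        have hkF : k ∉ F := by
          simp only [hF, Finset.mem_filter, Finset.mem_univ, true_and]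
          rintro ⟨-, hIk⟩
          exact hne k (hIk.symm.trans h0)
        rw [mul_comm, h0, if_neg (by simp [Finset.mem_insert, hku, hkF])]
  have hX : charPoly N C (I u) (e₂ * I u) (e₃ * I u) = charPoly N C 1 e₂ e₃ * I u := by
    unfold charPoly
    rw [Finset.sum_mul]
    refine Finset.sum_congr rfl fun p hp => ?_
    have hpsum : p.1 + p.2.1 + p.2.2 = N := (Finset.mem_filter.mp hp).2
    rw [smul_mul_assoc]
    congr 1
    calc I u ^ p.1 * (e₂ * I u) ^ p.2.1 * (e₃ * I u) ^ p.2.2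
        = 1 ^ p.1 * e₂ ^ p.2.1 * e₃ ^ p.2.2 * I u ^ (p.1 + p.2.1 + p.2.2) := by
          rw [mul_pow, mul_pow, pow_add, pow_add, one_pow]; ring
      _ = 1 ^ p.1 * e₂ ^ p.2.1 * e₃ ^ p.2.2 * I u := by rw [hpsum, hpow N hN]
  have hsum : charPoly N C (I u) (e₂ * I u) (e₃ * I u) = ∑ k ∈ insert u F, V k • I k := by
    rw [hX, hV, Finset.sum_mul]
    have hcongr : ∀ k ∈ Finset.univ,
        V k • I k * I u = if k ∈ insert u F then V k • I k else 0 := by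
      intro k _
      rw [smul_mul_assoc, hmul k]
      split <;> simp
    rw [Finset.sum_congr rfl hcongr, Finset.sum_ite_mem, Finset.univ_inter]
  refine ⟨by rw [hsum, Finset.sum_insert huF], ?_⟩
  rw [hsum]
  constructor
  · intro h0
    set c : Fin n → ℂ := fun k => if k ∈ insert u F then V k else 0 with hc
    have hc0 : ∀ k, c k = 0 := by
      have hsum2 : ∑ k, c k • bI k = 0 := by
        simp only [hbI, hc, ite_smul, zero_smul]
        rw [Finset.sum_ite_mem, Finset.univ_inter]
        exact h0
      exact Fintype.linearIndependent_iff.mp bI.linearIndependent c hsum2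
    refine ⟨?_, ?_⟩
    · have := hc0 u
      simpa [hc, Finset.mem_insert] using this
    · intro s hs1 hs2
      have hsF : s ∈ F := by
        simp [hF, Finset.mem_filter, hs1, hs2]
      have := hc0 s
      simpa [hc, Finset.mem_insert, hsF] using this
  · rintro ⟨hVu, hVs⟩
    rw [Finset.sum_insert huF, hVu, zero_smul, zero_add]
    refine Finset.sum_eq_zero fun s hs => ?_
    have hsF := Finset.mem_filter.mp hs
    rw [hVs s hsF.2.1 hsF.2.2, zero_smul]
end

section
/- For every u ∈ {1,…,m}, X(1, ẽ₂(u), ẽ₃(u)) = X(I_u, e₂·I_u, e₃·I_u) + S·(1 − I_u), where S := Σ_{α+β+γ=N} C_{α,β,γ}·a_u^β·b_u^γ ∈ ℂ. In particular the two characteristic equations X(1, ẽ₂(u), ẽ₃(u)) = 0 and X(I_u, e₂·I_u, e₃·I_u) = 0 generate the same system of equations in the coefficients: both equal S plus one and the same element of the ℂ-span of {I_{m+1},…,I_n} multiplied into their respective idempotent parts, X(1,ẽ₂(u),ẽ₃(u)) = S·1 + W and X(I_u, e₂·I_u, e₃·I_u) = S·I_u + W for a common W in the ℂ-span of {I_{m+1},…,I_n}.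 -/
open scoped Classical

theorem stmt4
    (n m : ℕ) (hm : 1 ≤ m) (hmn : m ≤ n)
    (A : Type) [CommRing A] [Algebra ℂ A]
    (I : Fin n → A) (bI : Module.Basis (Fin n) ℂ A) (hbI : ∀ k, bI k = I k)
    (h1 : ∀ r s : Fin n, (r : ℕ) < m → (s : ℕ) < m →
      I r * I s = if r = s then I r else 0)
    (h2 : ∀ r s : Fin n, m ≤ (r : ℕ) → m ≤ (s : ℕ) →
      I r * I s ∈ Submodule.span ℂ (I '' {k : Fin n | max (r : ℕ) (s : ℕ) < (k : ℕ)}))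
    (h3 : ∀ s : Fin n, m ≤ (s : ℕ) → ∃ u : Fin n, (u : ℕ) < m ∧
      I u * I s = I s ∧ ∀ r : Fin n, (r : ℕ) < m → r ≠ u → I r * I s = 0)
    (N : ℕ) (hN : 1 ≤ N) (C : ℕ → ℕ → ℕ → ℂ)
    (a b : Fin n → ℂ) (e₂ e₃ : A)
    (he₂ : e₂ = ∑ r, a r • I r) (he₃ : e₃ = ∑ r, b r • I r)
    (re₂ re₃ : A)
    (hre₂ : re₂ = ∑ r ∈ Finset.univ.filter (fun r : Fin n => m ≤ (r : ℕ)), a r • I r)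
    (hre₃ : re₃ = ∑ r ∈ Finset.univ.filter (fun r : Fin n => m ≤ (r : ℕ)), b r • I r)
    (te₂ te₃ : Fin n → A)
    (hte₂ : ∀ u : Fin n, te₂ u = algebraMap ℂ A (a u) + I u * re₂)
    (hte₃ : ∀ u : Fin n, te₃ u = algebraMap ℂ A (b u) + I u * re₃)
    (u : Fin n) (hu : (u : ℕ) < m)
    (S : ℂ)
    (hS : S = ∑ p ∈ (Finset.range (N + 1) ×ˢ Finset.range (N + 1) ×ˢ
        Finset.range (N + 1)).filter (fun p => p.1 + p.2.1 + p.2.2 = N),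
      C p.1 p.2.1 p.2.2 * a u ^ p.2.1 * b u ^ p.2.2) :
    charPoly N C 1 (te₂ u) (te₃ u) =
        charPoly N C (I u) (e₂ * I u) (e₃ * I u) + S • ((1 : A) - I u) ∧
      ∃ W ∈ Submodule.span ℂ (I '' {k : Fin n | m ≤ (k : ℕ)}),
        charPoly N C 1 (te₂ u) (te₃ u) = S • (1 : A) + W ∧
          charPoly N C (I u) (e₂ * I u) (e₃ * I u) = S • I u + W := by

  have hIu : I u * I u = I u := by
    have h := h1 u u hu hu
    simpa using h
  have hIpow : ∀ k : ℕ, 1 ≤ k → I u ^ k = I u := by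
    intro k hk
    induction k with
    | zero => omega
    | succ k ih =>
      rcases Nat.eq_or_lt_of_le hk with h | h
      · rw [← h, pow_one]
      · have hk1 : 1 ≤ k := by omega
        rw [pow_succ, ih hk1, hIu]
  set R : Submodule ℂ A := Submodule.span ℂ (I '' {k : Fin n | m ≤ (k : ℕ)}) with hRdef
  have hRmul : ∀ x ∈ R, ∀ y ∈ R, x * y ∈ R := by
    have hle : R * R ≤ R := by
      rw [hRdef, Submodule.span_mul_span, Submodule.span_le]
      rintro z ⟨x, hx, y, hy, rfl⟩
      obtain ⟨r, hr, rfl⟩ := hx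
      obtain ⟨s, hs, rfl⟩ := hy
      refine Submodule.span_mono ?_ (h2 r s hr hs)
      rintro z ⟨k, hk, rfl⟩
      refine ⟨k, ?_, rfl⟩
      simp only [Set.mem_setOf_eq] at hk hr ⊢
      omega
    intro x hx y hy
    exact hle (Submodule.mul_mem_mul hx hy)
  have hIuR : ∀ s : Fin n, m ≤ (s : ℕ) → I u * I s ∈ R := by
    intro s hs
    obtain ⟨v, hv, hvs, hother⟩ := h3 s hs
    by_cases huv : u = v
    · rw [huv, hvs]
      exact Submodule.subset_span ⟨s, hs, rfl⟩
    · rw [hother u hu huv]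
      exact zero_mem _
  -- P: element of R fixed by multiplication by I u
  set P : A → Prop := fun x => x ∈ R ∧ I u * x = x with hPdef
  have hP0 : P 0 := ⟨zero_mem _, mul_zero _⟩
  have hPadd : ∀ x y, P x → P y → P (x + y) := by
    rintro x y ⟨hx, hx'⟩ ⟨hy, hy'⟩
    exact ⟨add_mem hx hy, by rw [mul_add, hx', hy']⟩
  have hPsmul : ∀ (c : ℂ) (x), P x → P (c • x) := by
    rintro c x ⟨hx, hx'⟩
    exact ⟨Submodule.smul_mem _ _ hx, by rw [mul_smul_comm, hx']⟩
  have hPmul : ∀ x y, P x → P y → P (x * y) := by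
    rintro x y ⟨hx, hx'⟩ ⟨hy, hy'⟩
    exact ⟨hRmul x hx y hy, by rw [← mul_assoc, hx']⟩
  have hradmem : ∀ (c : Fin n → ℂ), P (I u * ∑ r ∈ Finset.univ.filter (fun r : Fin n => m ≤ (r : ℕ)), c r • I r) := by
    intro c
    constructor
    · rw [Finset.mul_sum]
      refine Submodule.sum_mem _ ?_
      intro r hr
      rw [Finset.mem_filter] at hr
      rw [mul_smul_comm]
      exact Submodule.smul_mem _ _ (hIuR r hr.2)
    · rw [← mul_assoc, hIu]
  have hPx2 : P (I u * re₂) := by rw [hre₂]; exact hradmem a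
  have hPx3 : P (I u * re₃) := by rw [hre₃]; exact hradmem b
  have hpowkey : ∀ (k : ℕ) (c : ℂ) (x : A), P x →
      ∃ w, P w ∧ (algebraMap ℂ A c + x) ^ k = algebraMap ℂ A (c ^ k) + w := by
    intro k c x hx
    induction k with
    | zero => exact ⟨0, hP0, by simp⟩
    | succ k ih =>
      obtain ⟨w, hw, hwe⟩ := ih
      refine ⟨c ^ k • x + c • w + x * w, ?_, ?_⟩
      · exact hPadd _ _ (hPadd _ _ (hPsmul _ _ hx) (hPsmul _ _ hw)) (hPmul _ _ hx hw)
      · rw [pow_succ, hwe, Algebra.smul_def, Algebra.smul_def, map_pow, map_pow]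
        ring
  have hterm : ∀ β γ : ℕ, ∃ w, P w ∧
      (te₂ u) ^ β * (te₃ u) ^ γ = algebraMap ℂ A (a u ^ β * b u ^ γ) + w := by
    intro β γ
    obtain ⟨w₂, hw₂, he2⟩ := hpowkey β (a u) (I u * re₂) hPx2
    obtain ⟨w₃, hw₃, he3⟩ := hpowkey γ (b u) (I u * re₃) hPx3
    refine ⟨(b u ^ γ) • w₂ + (a u ^ β) • w₃ + w₂ * w₃, ?_, ?_⟩
    · exact hPadd _ _ (hPadd _ _ (hPsmul _ _ hw₂) (hPsmul _ _ hw₃)) (hPmul _ _ hw₂ hw₃)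
    · rw [hte₂, hte₃, he2, he3, Algebra.smul_def, Algebra.smul_def, map_mul, map_pow, map_pow]
      ring
  choose w hPw hwe using hterm
  set F := (Finset.range (N + 1) ×ˢ Finset.range (N + 1) ×ˢ Finset.range (N + 1)).filter
      (fun p => p.1 + p.2.1 + p.2.2 = N) with hFdef
  set W := ∑ p ∈ F, C p.1 p.2.1 p.2.2 • w p.2.1 p.2.2 with hWdef
  have hPW : P W := by
    rw [hWdef]
    refine Finset.sum_induction _ P hPadd hP0 ?_
    intro p _
    exact hPsmul _ _ (hPw _ _)
  have hX1 : charPoly N C 1 (te₂ u) (te₃ u) = S • (1 : A) + W := by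
    rw [charPoly, ← hFdef, hWdef, hS]
    rw [Finset.sum_smul, ← Finset.sum_add_distrib]
    refine Finset.sum_congr rfl ?_
    intro p hp
    rw [one_pow, one_mul, hwe, smul_add]
    congr 1
    rw [Algebra.algebraMap_eq_smul_one, smul_smul, mul_assoc]
  have heI : ∀ (c : Fin n → ℂ) (re : A)
      (hre : re = ∑ r ∈ Finset.univ.filter (fun r : Fin n => m ≤ (r : ℕ)), c r • I r),
      (∑ r, c r • I r) * I u = c u • I u + I u * re := by
    intro c re hre
    rw [Finset.sum_mul, ← Finset.sum_filter_add_sum_filter_not Finset.univ (fun r : Fin n => (r : ℕ) < m)]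
    congr 1
    · rw [Finset.sum_eq_single_of_mem u (by simp [hu])]
      · rw [smul_mul_assoc, h1 u u hu hu, if_pos rfl]
      · intro r hr hne
        rw [Finset.mem_filter] at hr
        rw [smul_mul_assoc, h1 r u hr.2 hu, if_neg hne, smul_zero]
    · rw [hre, Finset.mul_sum]
      rw [show (Finset.univ.filter (fun r : Fin n => ¬ (r : ℕ) < m)) =
          (Finset.univ.filter (fun r : Fin n => m ≤ (r : ℕ))) by simp [not_lt]]
      refine Finset.sum_congr rfl ?_
      intro r _
      rw [smul_mul_assoc, mul_smul_comm, mul_comm (I r) (I u)]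
  have he2Iu : e₂ * I u = I u * te₂ u := by
    rw [he₂, heI a re₂ hre₂, hte₂, mul_add, ← mul_assoc, hIu, mul_comm (I u) (algebraMap ℂ A (a u)), ← Algebra.smul_def]
  have he3Iu : e₃ * I u = I u * te₃ u := by
    rw [he₃, heI b re₃ hre₃, hte₃, mul_add, ← mul_assoc, hIu, mul_comm (I u) (algebraMap ℂ A (b u)), ← Algebra.smul_def]
  have hX2 : charPoly N C (I u) (e₂ * I u) (e₃ * I u) = S • I u + W := by
    rw [he2Iu, he3Iu, charPoly, ← hFdef, hWdef, hS]
    rw [Finset.sum_smul, ← Finset.sum_add_distrib]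
    refine Finset.sum_congr rfl ?_
    intro p hp
    have hpN : p.1 + p.2.1 + p.2.2 = N := (Finset.mem_filter.1 hp).2
    have hbase : I u ^ p.1 * (I u * te₂ u) ^ p.2.1 * (I u * te₃ u) ^ p.2.2
        = I u * ((te₂ u) ^ p.2.1 * (te₃ u) ^ p.2.2) := by
      rw [mul_pow, mul_pow, show I u ^ p.1 * (I u ^ p.2.1 * (te₂ u) ^ p.2.1) * (I u ^ p.2.2 * (te₃ u) ^ p.2.2)
          = (I u ^ p.1 * I u ^ p.2.1 * I u ^ p.2.2) * ((te₂ u) ^ p.2.1 * (te₃ u) ^ p.2.2) by ring,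
        ← pow_add, ← pow_add, hpN, hIpow N hN]
    rw [hbase, hwe, mul_add, (hPw p.2.1 p.2.2).2, mul_comm (I u) (algebraMap ℂ A _), ← Algebra.smul_def,
      smul_add, smul_smul, mul_assoc]
  refine ⟨?_, W, hPW.1, hX1, hX2⟩
  rw [hX1, hX2, smul_sub]
  abel
end

section
/- (Theorem 1.) Suppose the vectors 1, e₂, e₃ of A are linearly independent over ℝ and satisfy the characteristic equation X(1, e₂, e₃) = 0. Then for every u ∈ {1,…,m} the triple of vectors 1, ẽ₂(u), ẽ₃(u) (which lie in the subalgebra of A spanned by 1 and I_{m+1},…,I_n) satisfies the characteristic equation X(1, ẽ₂(u), ẽ₃(u)) = 0. -/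
open scoped Classical

theorem stmt5
    (n m : ℕ) (hm : 1 ≤ m) (hmn : m ≤ n)
    (A : Type) [CommRing A] [Algebra ℂ A]
    (I : Fin n → A) (bI : Module.Basis (Fin n) ℂ A) (hbI : ∀ k, bI k = I k)
    (h1 : ∀ r s : Fin n, (r : ℕ) < m → (s : ℕ) < m →
      I r * I s = if r = s then I r else 0)
    (h2 : ∀ r s : Fin n, m ≤ (r : ℕ) → m ≤ (s : ℕ) →
      I r * I s ∈ Submodule.span ℂ (I '' {k : Fin n | max (r : ℕ) (s : ℕ) < (k : ℕ)}))
    (h3 : ∀ s : Fin n, m ≤ (s : ℕ) → ∃ u : Fin n, (u : ℕ) < m ∧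
      I u * I s = I s ∧ ∀ r : Fin n, (r : ℕ) < m → r ≠ u → I r * I s = 0)
    [Module ℝ A] [IsScalarTower ℝ ℂ A]
    (N : ℕ) (hN : 1 ≤ N) (C : ℕ → ℕ → ℕ → ℂ)
    (a b : Fin n → ℂ) (e₂ e₃ : A)
    (he₂ : e₂ = ∑ r, a r • I r) (he₃ : e₃ = ∑ r, b r • I r)
    (re₂ re₃ : A)
    (hre₂ : re₂ = ∑ r ∈ Finset.univ.filter (fun r : Fin n => m ≤ (r : ℕ)), a r • I r)
    (hre₃ : re₃ = ∑ r ∈ Finset.univ.filter (fun r : Fin n => m ≤ (r : ℕ)), b r • I r)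
    (te₂ te₃ : Fin n → A)
    (hte₂ : ∀ u : Fin n, te₂ u = algebraMap ℂ A (a u) + I u * re₂)
    (hte₃ : ∀ u : Fin n, te₃ u = algebraMap ℂ A (b u) + I u * re₃)
    (hind : LinearIndependent ℝ ![(1 : A), e₂, e₃])
    (hchar : charPoly N C 1 e₂ e₃ = 0)
    (u : Fin n) (hu : (u : ℕ) < m) :
    te₂ u ∈ Submodule.span ℂ ({(1 : A)} ∪ I '' {k : Fin n | m ≤ (k : ℕ)}) ∧
      te₃ u ∈ Submodule.span ℂ ({(1 : A)} ∪ I '' {k : Fin n | m ≤ (k : ℕ)}) ∧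
      charPoly N C 1 (te₂ u) (te₃ u) = 0 := by
  set S : Submodule ℂ A := Submodule.span ℂ (I '' {k : Fin n | m ≤ (k : ℕ)}) with hS
  have hIuu : I u * I u = I u := by simpa using h1 u u hu hu
  -- multiplication by `I u` preserves S
  have hR1 : ∀ x ∈ S, I u * x ∈ S := by
    intro x hx
    induction hx using Submodule.span_induction with
    | mem y hy =>
      obtain ⟨k, hk, rfl⟩ := hy
      obtain ⟨us, hus, h1s, h0s⟩ := h3 k hk
      by_cases hek : u = us
      · rw [hek, h1s]; exact Submodule.subset_span ⟨k, hk, rfl⟩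
      · rw [h0s u hu hek]; exact zero_mem S
    | zero => rw [mul_zero]; exact zero_mem S
    | add x y _ _ hx hy => rw [mul_add]; exact add_mem hx hy
    | smul c x _ hx => rw [mul_smul_comm]; exact Submodule.smul_mem _ _ hx
  -- S is closed under multiplication
  have hR2 : ∀ x ∈ S, ∀ y ∈ S, x * y ∈ S := by
    have base : ∀ r s : Fin n, m ≤ (r : ℕ) → m ≤ (s : ℕ) → I r * I s ∈ S := by
      intro r s hr hs
      refine Submodule.span_mono ?_ (h2 r s hr hs)
      rintro _ ⟨k, hk, rfl⟩
      refine ⟨k, ?_, rfl⟩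
      simp only [Set.mem_setOf_eq, max_lt_iff] at hk ⊢
      omega
    intro x hx
    induction hx using Submodule.span_induction with
    | mem y hy =>
      rintro z hz
      obtain ⟨r, hr, rfl⟩ := hy
      induction hz using Submodule.span_induction with
      | mem w hw => obtain ⟨s, hs, rfl⟩ := hw; exact base r s hr hs
      | zero => rw [mul_zero]; exact zero_mem S
      | add p q _ _ hp hq => rw [mul_add]; exact add_mem hp hq
      | smul c p _ hp => rw [mul_smul_comm]; exact Submodule.smul_mem _ _ hp
    | zero => intro z hz; rw [zero_mul]; exact zero_mem S
    | add p q _ _ hp hq => intro z hz; rw [add_mul]; exact add_mem (hp z hz) (hq z hz)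
    | smul c p _ hp => intro z hz; rw [smul_mul_assoc]; exact Submodule.smul_mem _ _ (hp z hz)
  have hre₂S : re₂ ∈ S := by
    rw [hre₂]
    refine Submodule.sum_mem _ ?_
    intro r hr
    simp only [Finset.mem_filter] at hr
    exact Submodule.smul_mem _ _ (Submodule.subset_span ⟨r, hr.2, rfl⟩)
  have hre₃S : re₃ ∈ S := by
    rw [hre₃]
    refine Submodule.sum_mem _ ?_
    intro r hr
    simp only [Finset.mem_filter] at hr
    exact Submodule.smul_mem _ _ (Submodule.subset_span ⟨r, hr.2, rfl⟩)
  -- the set of elements of the form c•1 + I u * v, v ∈ S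
  set P : A → Prop := fun x => ∃ c : ℂ, ∃ v, v ∈ S ∧ x = c • (1 : A) + I u * v with hP
  have hP0 : P 0 := ⟨0, 0, zero_mem S, by simp⟩
  have hP1 : P 1 := ⟨1, 0, zero_mem S, by simp⟩
  have hPadd : ∀ x y, P x → P y → P (x + y) := by
    rintro x y ⟨c, v, hv, rfl⟩ ⟨d, w, hw, rfl⟩
    exact ⟨c + d, v + w, add_mem hv hw, by rw [add_smul, mul_add]; ring⟩
  have hPsmul : ∀ (c : ℂ) x, P x → P (c • x) := by
    rintro c x ⟨d, v, hv, rfl⟩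
    exact ⟨c * d, c • v, Submodule.smul_mem _ _ hv, by
      rw [smul_add, smul_smul, mul_smul_comm]⟩
  have hPmul : ∀ x y, P x → P y → P (x * y) := by
    rintro x y ⟨c, v, hv, rfl⟩ ⟨d, w, hw, rfl⟩
    refine ⟨c * d, d • v + c • w + I u * (v * w),
      add_mem (add_mem (Submodule.smul_mem _ _ hv) (Submodule.smul_mem _ _ hw))
        (hR1 _ (hR2 v hv w hw)), ?_⟩
    have h' : I u * (I u * (v * w)) = (I u * v) * (I u * w) := by
      rw [show (I u * v) * (I u * w) = I u * I u * (v * w) by ring, ← mul_assoc]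
    simp only [Algebra.smul_def, map_mul, mul_one]
    linear_combination -h'
  have hPpow : ∀ x, P x → ∀ k : ℕ, P (x ^ k) := by
    intro x hx k
    induction k with
    | zero => simpa using hP1
    | succ k ih => rw [pow_succ]; exact hPmul _ _ ih hx
  have hPte₂ : P (te₂ u) := by
    refine ⟨a u, re₂, hre₂S, ?_⟩
    rw [hte₂ u, Algebra.algebraMap_eq_smul_one]
  have hPte₃ : P (te₃ u) := by
    refine ⟨b u, re₃, hre₃S, ?_⟩
    rw [hte₃ u, Algebra.algebraMap_eq_smul_one]
  -- membership claims
  have hmem : ∀ x, P x → x ∈ Submodule.span ℂ ({(1 : A)} ∪ I '' {k : Fin n | m ≤ (k : ℕ)}) := by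
    rintro x ⟨c, v, hv, rfl⟩
    refine add_mem (Submodule.smul_mem _ _ (Submodule.subset_span (Or.inl rfl))) ?_
    have : S ≤ Submodule.span ℂ ({(1 : A)} ∪ I '' {k : Fin n | m ≤ (k : ℕ)}) :=
      Submodule.span_mono Set.subset_union_right
    exact this (hR1 v hv)
  refine ⟨hmem _ hPte₂, hmem _ hPte₃, ?_⟩
  -- X(1, te₂, te₃) satisfies P
  have hPX : P (charPoly N C 1 (te₂ u) (te₃ u)) := by
    rw [charPoly]
    refine Finset.sum_induction _ P hPadd hP0 ?_
    intro p _
    exact hPsmul _ _ (hPmul _ _ (hPmul _ _ (hPpow _ hP1 _) (hPpow _ hPte₂ _)) (hPpow _ hPte₃ _))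
  -- I u * te₂ u = I u * e₂ and similarly for te₃
  have hsplit : ∀ z w : A, I u * (z * w) = (I u * z) * (I u * w) := by
    intro z w
    rw [show (I u * z) * (I u * w) = (I u * I u) * (z * w) by ring, hIuu]
  have hIe : ∀ (c : Fin n → ℂ) (re : A),
      re = ∑ r ∈ Finset.univ.filter (fun r : Fin n => m ≤ (r : ℕ)), c r • I r →
      I u * (∑ r, c r • I r) = c u • I u + I u * re := by
    intro c re hre
    rw [Finset.mul_sum, hre, Finset.mul_sum,
      ← Finset.sum_filter_add_sum_filter_not Finset.univ (fun r : Fin n => m ≤ (r : ℕ))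
        (fun r => I u * (c r • I r)), add_comm]
    congr 1
    rw [Finset.sum_eq_single_of_mem u (by simp; omega)]
    · rw [mul_smul_comm, hIuu]
    · intro r hr hru
      simp only [Finset.mem_filter, Finset.mem_univ, true_and, not_le] at hr
      rw [mul_smul_comm, h1 u r hu hr, if_neg (fun h => hru h.symm), smul_zero]
  have hIte₂ : I u * te₂ u = I u * e₂ := by
    rw [hte₂ u, he₂, hIe a re₂ hre₂, mul_add, Algebra.algebraMap_eq_smul_one,
      mul_smul_comm, mul_one, ← mul_assoc, hIuu]
  have hIte₃ : I u * te₃ u = I u * e₃ := by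
    rw [hte₃ u, he₃, hIe b re₃ hre₃, mul_add, Algebra.algebraMap_eq_smul_one,
      mul_smul_comm, mul_one, ← mul_assoc, hIuu]
  have hpoweq : ∀ (x y : A), I u * x = I u * y → ∀ k : ℕ, I u * x ^ k = I u * y ^ k := by
    intro x y h k
    induction k with
    | zero => rw [pow_zero, pow_zero]
    | succ k ih => rw [pow_succ, pow_succ, hsplit, hsplit, h, ih]
  -- multiply the characteristic polynomial by I u
  have hIX : I u * charPoly N C 1 (te₂ u) (te₃ u) = 0 := by
    have : I u * charPoly N C 1 (te₂ u) (te₃ u) = I u * charPoly N C 1 e₂ e₃ := by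
      rw [charPoly, charPoly, Finset.mul_sum, Finset.mul_sum]
      refine Finset.sum_congr rfl ?_
      intro p _
      rw [mul_smul_comm, mul_smul_comm]
      congr 1
      rw [one_pow, one_mul, one_mul, hsplit, hsplit, hpoweq _ _ hIte₂, hpoweq _ _ hIte₃]
    rw [this, hchar, mul_zero]
  -- extract the conclusion using the coordinate functional at u
  obtain ⟨c, v, hv, hx⟩ := hPX
  have hIuv : I u * (I u * v) = I u * v := by rw [← mul_assoc, hIuu]
  have hIXexp : c • I u + I u * v = 0 := by
    rw [hx, mul_add, mul_smul_comm, mul_one, hIuv] at hIX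
    exact hIX
  have hcoordS : ∀ x ∈ S, bI.coord u x = 0 := by
    intro x hx
    induction hx using Submodule.span_induction with
    | mem y hy =>
      obtain ⟨k, hk, rfl⟩ := hy
      have hku : k ≠ u := by
        intro h; rw [h] at hk; exact absurd hk (by simpa using hu)
      rw [← hbI, Module.Basis.coord_apply, Module.Basis.repr_self, Finsupp.single_apply_eq_zero.2]
      intro h; exact absurd h.symm hku
    | zero => simp
    | add x y _ _ hx hy => rw [map_add, hx, hy, add_zero]
    | smul d x _ hx => rw [map_smul, hx, smul_zero]
  have hc : c = 0 := by
    have h0 := congrArg (bI.coord u) hIXexp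
    rw [map_add, map_smul, hcoordS _ (hR1 v hv), ← hbI, Module.Basis.coord_apply,
      Module.Basis.repr_self] at h0
    simpa using h0
  have hIv : I u * v = 0 := by
    rw [hc, zero_smul, zero_add] at hIXexp
    exact hIXexp
  rw [hx, hc, hIv, zero_smul, add_zero]
end

section
/- The multiplicative identity of A equals the sum of the first m basis idempotents: 1 = Σ_{u=1}^m I_u. -/
open scoped Classical

theorem stmt8
    (n m : ℕ) (hm : 1 ≤ m) (hmn : m ≤ n)
    (A : Type) [CommRing A] [Algebra ℂ A]
    (I : Fin n → A) (bI : Module.Basis (Fin n) ℂ A) (hbI : ∀ k, bI k = I k)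
    (h1 : ∀ r s : Fin n, (r : ℕ) < m → (s : ℕ) < m →
      I r * I s = if r = s then I r else 0)
    (h2 : ∀ r s : Fin n, m ≤ (r : ℕ) → m ≤ (s : ℕ) →
      I r * I s ∈ Submodule.span ℂ (I '' {k : Fin n | max (r : ℕ) (s : ℕ) < (k : ℕ)}))
    (h3 : ∀ s : Fin n, m ≤ (s : ℕ) → ∃ u : Fin n, (u : ℕ) < m ∧
      I u * I s = I s ∧ ∀ r : Fin n, (r : ℕ) < m → r ≠ u → I r * I s = 0)
    : (1 : A) = ∑ u ∈ Finset.univ.filter (fun u : Fin n => (u : ℕ) < m), I u := by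
  set e : A := ∑ u ∈ Finset.univ.filter (fun u : Fin n => (u : ℕ) < m), I u with he
  have key : ∀ k : Fin n, e * I k = I k := by
    intro k
    rw [he, Finset.sum_mul]
    by_cases hk : (k : ℕ) < m
    · have : ∀ u ∈ Finset.univ.filter (fun u : Fin n => (u : ℕ) < m),
          I u * I k = if u = k then I k else 0 := by
        intro u hu
        simp only [Finset.mem_filter, Finset.mem_univ, true_and] at hu
        rw [h1 u k hu hk]
        split_ifs with h
        · rw [h]
        · rfl
      rw [Finset.sum_congr rfl this, Finset.sum_ite_eq' _ k (fun _ => I k)]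
      simp [hk]
    · obtain ⟨u0, hu0m, hu0, hrest⟩ := h3 k (le_of_not_gt hk)
      rw [Finset.sum_eq_single u0]
      · exact hu0
      · intro u hu hne
        simp only [Finset.mem_filter, Finset.mem_univ, true_and] at hu
        exact hrest u hu hne
      · intro h
        simp only [Finset.mem_filter, Finset.mem_univ, true_and] at h
        exact absurd hu0m h
  have hmap : (LinearMap.mulLeft ℂ e) = LinearMap.id := by
    apply bI.ext
    intro k
    simp [hbI, key]
  have := congrFun (congrArg (fun f => f.toFun) hmap) 1
  simpa [LinearMap.mulLeft, he] using this.symm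
end

section
/- For each u ∈ {1,…,m}, the ℂ-linear span 𝓘_u of the set {I_k : k ∈ {1,…,n}, k ≠ u} is an ideal of A, and it is a maximal ideal of A. -/
open scoped Classical

theorem stmt9
    (n m : ℕ) (hm : 1 ≤ m) (hmn : m ≤ n)
    (A : Type) [CommRing A] [Algebra ℂ A]
    (I : Fin n → A) (bI : Module.Basis (Fin n) ℂ A) (hbI : ∀ k, bI k = I k)
    (h1 : ∀ r s : Fin n, (r : ℕ) < m → (s : ℕ) < m →
      I r * I s = if r = s then I r else 0)
    (h2 : ∀ r s : Fin n, m ≤ (r : ℕ) → m ≤ (s : ℕ) →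
      I r * I s ∈ Submodule.span ℂ (I '' {k : Fin n | max (r : ℕ) (s : ℕ) < (k : ℕ)}))
    (h3 : ∀ s : Fin n, m ≤ (s : ℕ) → ∃ u : Fin n, (u : ℕ) < m ∧
      I u * I s = I s ∧ ∀ r : Fin n, (r : ℕ) < m → r ≠ u → I r * I s = 0)
    (u : Fin n) (hu : (u : ℕ) < m) :
    ∃ J : Ideal A, (J : Set A) =
        (Submodule.span ℂ (I '' {k : Fin n | k ≠ u}) : Set A) ∧ J.IsMaximal := by
  have hIeq : I = ⇑bI := funext fun k => (hbI k).symm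
  set S : Submodule ℂ A := Submodule.span ℂ (I '' {k : Fin n | k ≠ u}) with hS
  have hIk : ∀ k : Fin n, k ≠ u → I k ∈ S := fun k hk =>
    Submodule.subset_span ⟨k, hk, rfl⟩
  have key : ∀ j k : Fin n, k ≠ u → I j * I k ∈ S := by
    intro j k hk
    rcases lt_or_ge (j : ℕ) m with hj | hj
    · rcases lt_or_ge (k : ℕ) m with hkm | hkm
      · rw [h1 j k hj hkm]
        split_ifs with h
        · subst h; exact hIk j hk
        · exact S.zero_mem
      · obtain ⟨v, hv, hv1, hv2⟩ := h3 k hkm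
        by_cases hjv : j = v
        · subst hjv; rw [hv1]; exact hIk k hk
        · rw [hv2 j hj hjv]; exact S.zero_mem
    · rcases lt_or_ge (k : ℕ) m with hkm | hkm
      · obtain ⟨v, hv, hv1, hv2⟩ := h3 j hj
        have hju : j ≠ u := fun h => by simp [h] at hj; omega
        by_cases hkv : k = v
        · subst hkv; rw [mul_comm, hv1]; exact hIk j hju
        · rw [mul_comm, hv2 k hkm hkv]; exact S.zero_mem
      · refine Submodule.span_mono ?_ (h2 j k hj hkm)
        rintro x ⟨l, hl, rfl⟩
        simp only [Set.mem_setOf_eq] at hl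
        refine ⟨l, ?_, rfl⟩
        intro hlu
        subst hlu
        omega
  have hmulI : ∀ j : Fin n, ∀ x ∈ S, I j * x ∈ S := by
    intro j x hx
    induction hx using Submodule.span_induction with
    | mem y hy => obtain ⟨k, hk, rfl⟩ := hy; exact key j k hk
    | zero => simpa using S.zero_mem
    | add y z _ _ hy hz => rw [mul_add]; exact S.add_mem hy hz
    | smul c y _ hy => rw [mul_smul_comm]; exact S.smul_mem c hy
  have hmulA : ∀ a : A, ∀ x ∈ S, a * x ∈ S := by
    intro a x hx
    have ha : a ∈ Submodule.span ℂ (Set.range I) := by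
      rw [hIeq, bI.span_eq]; trivial
    induction ha using Submodule.span_induction with
    | mem b hb => obtain ⟨j, rfl⟩ := hb; exact hmulI j x hx
    | zero => simpa using S.zero_mem
    | add b c _ _ hb hc => rw [add_mul]; exact S.add_mem hb hc
    | smul c b _ hb => rw [smul_mul_assoc]; exact S.smul_mem c hb
  refine ⟨{ carrier := S
            add_mem' := fun h h' => S.add_mem h h'
            zero_mem' := S.zero_mem
            smul_mem' := fun c x hx => by
              simpa [smul_eq_mul] using hmulA c x hx }, rfl, ?_⟩
  have hmemS : ∀ x : A, x ∈ S ↔ ↑(bI.repr x).support ⊆ {k : Fin n | k ≠ u} := by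
    intro x
    rw [hS, hIeq]
    exact bI.mem_span_image
  have hnot : I u ∉ S := by
    intro h
    rw [hmemS] at h
    have : u ∈ (bI.repr (I u)).support := by
      rw [hIeq, Finsupp.mem_support_iff, bI.repr_self, Finsupp.single_eq_same]
      exact one_ne_zero
    exact (h this) rfl
  rw [Ideal.isMaximal_def]
  constructor
  · intro htop
    exact hnot (htop.ge trivial)
  · intro K hK
    obtain ⟨x, hxK, hxJ⟩ := (SetLike.lt_iff_le_and_exists.mp hK).2
    have hSK : ∀ y ∈ S, y ∈ K := fun y hy => hK.le hy
    have hcne : bI.repr x u ≠ 0 := by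
      intro hc
      refine hxJ ?_
      show x ∈ S
      rw [hmemS]
      intro k hk
      intro hku
      subst hku
      exact (Finsupp.mem_support_iff.mp hk) hc
    set c : ℂ := bI.repr x u with hc
    have hyS : x - c • bI u ∈ S := by
      rw [hmemS]
      intro k hk
      intro hku
      subst hku
      apply Finsupp.mem_support_iff.mp hk
      simp [map_sub, map_smul, bI.repr_self, hc]
    have hcIu : c • bI u ∈ K := by
      have : c • bI u = x - (x - c • bI u) := by ring_nf
      rw [this]
      exact K.sub_mem hxK (hSK _ hyS)
    have hIuK : bI u ∈ K := by
      have := K.smul_of_tower_mem c⁻¹ hcIu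
      rwa [smul_smul, inv_mul_cancel₀ hcne, one_smul] at this
    have hallK : ∀ k : Fin n, I k ∈ K := by
      intro k
      by_cases hk : k = u
      · subst hk; rw [hIeq]; exact hIuK
      · exact hSK _ (hIk k hk)
    rw [eq_top_iff]
    rintro a -
    have ha : a ∈ Submodule.span ℂ (Set.range I) := by
      rw [hIeq, bI.span_eq]; trivial
    induction ha using Submodule.span_induction with
    | mem b hb => obtain ⟨j, rfl⟩ := hb; exact hallK j
    | zero => exact K.zero_mem
    | add b d _ _ hb hd => exact K.add_mem hb hd
    | smul r b _ hb => exact K.smul_of_tower_mem r hb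
end

section
/- The ℂ-linear span N of {I_{m+1},…,I_n} is a nilpotent subalgebra of A: any product of n−m+1 elements of N equals 0; that is, for all x_1,…,x_{n−m+1} in the ℂ-span of {I_{m+1},…,I_n}, x_1·x_2·…·x_{n−m+1} = 0. -/
open scoped Classical

theorem stmt12
    (n m : ℕ) (hm : 1 ≤ m) (hmn : m ≤ n)
    (A : Type) [CommRing A] [Algebra ℂ A]
    (I : Fin n → A) (bI : Module.Basis (Fin n) ℂ A) (hbI : ∀ k, bI k = I k)
    (h1 : ∀ r s : Fin n, (r : ℕ) < m → (s : ℕ) < m →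
      I r * I s = if r = s then I r else 0)
    (h2 : ∀ r s : Fin n, m ≤ (r : ℕ) → m ≤ (s : ℕ) →
      I r * I s ∈ Submodule.span ℂ (I '' {k : Fin n | max (r : ℕ) (s : ℕ) < (k : ℕ)}))
    (h3 : ∀ s : Fin n, m ≤ (s : ℕ) → ∃ u : Fin n, (u : ℕ) < m ∧
      I u * I s = I s ∧ ∀ r : Fin n, (r : ℕ) < m → r ≠ u → I r * I s = 0)
    (x : Fin (n - m + 1) → A)
    (hx : ∀ i, x i ∈ Submodule.span ℂ (I '' {k : Fin n | m ≤ (k : ℕ)})) :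
    ∏ i, x i = 0 := by
  set N : ℕ → Submodule ℂ A := fun j => Submodule.span ℂ (I '' {k : Fin n | j ≤ (k : ℕ)})
    with hN
  have hmul : ∀ j : ℕ, m ≤ j → ∀ a ∈ N m, ∀ b ∈ N j, a * b ∈ N (j + 1) := by
    intro j hj a ha b hb
    induction ha using Submodule.span_induction with
    | mem u hu =>
      induction hb using Submodule.span_induction with
      | mem v hv =>
        obtain ⟨r, hr, rfl⟩ := hu
        obtain ⟨s, hs, rfl⟩ := hv
        have := h2 r s hr (le_trans hj hs)
        refine Submodule.span_mono ?_ this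
        intro z hz
        obtain ⟨k, hk, rfl⟩ := hz
        have hr' : m ≤ (r : ℕ) := hr
        have hs' : j ≤ (s : ℕ) := hs
        have hk' : max (r : ℕ) (s : ℕ) < (k : ℕ) := hk
        exact ⟨k, by simp only [Set.mem_setOf_eq]; omega, rfl⟩
      | zero => simp
      | add y z _ _ hy hz => rw [mul_add]; exact add_mem hy hz
      | smul c y _ hy => rw [mul_smul_comm]; exact Submodule.smul_mem _ c hy
    | zero => simp
    | add y z _ _ hy hz => rw [add_mul]; exact add_mem hy hz
    | smul c y _ hy => rw [smul_mul_assoc]; exact Submodule.smul_mem _ c hy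
  have key : ∀ t : ℕ, ∀ y : Fin (t + 1) → A, (∀ i, y i ∈ N m) → ∏ i, y i ∈ N (m + t) := by
    intro t
    induction t with
    | zero => intro y hy; simpa using hy 0
    | succ t ih =>
      intro y hy
      rw [Fin.prod_univ_succ]
      have htail : ∏ i : Fin (t + 1), y i.succ ∈ N (m + t) := ih _ fun i => hy i.succ
      have := hmul (m + t) (by omega) (y 0) (hy 0) _ htail
      simpa [add_assoc] using this
  have hprod : ∏ i, x i ∈ N (m + (n - m)) := key (n - m) x hx
  have : m + (n - m) = n := by omega
  rw [this] at hprod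
  have hempty : (I '' {k : Fin n | n ≤ (k : ℕ)}) = ∅ := by
    ext z
    simp only [Set.mem_image, Set.mem_setOf_eq, Set.mem_empty_iff_false, iff_false]
    rintro ⟨k, hk, -⟩
    exact absurd hk (by omega)
  have : N n = ⊥ := by rw [hN]; simp [hempty]
  rw [this] at hprod
  simpa using hprod
end

section
/- For real numbers x, y, z, the element ζ := x·1 + y·e₂ + z·e₃ of A is not invertible (is not a unit of A) if and only if there exists u ∈ {1,…,m} such that x + y·Re(a_u) + z·Re(b_u) = 0 and y·Im(a_u) + z·Im(b_u) = 0; that is, the points (x,y,z) ∈ ℝ³ corresponding to non-invertible elements ζ are exactly those lying on one of the m straight lines L_u defined by these two equations. -/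
open scoped Classical

theorem stmt14
    (n m : ℕ) (hm : 1 ≤ m) (hmn : m ≤ n)
    (A : Type) [CommRing A] [Algebra ℂ A]
    (I : Fin n → A) (bI : Module.Basis (Fin n) ℂ A) (hbI : ∀ k, bI k = I k)
    (h1 : ∀ r s : Fin n, (r : ℕ) < m → (s : ℕ) < m →
      I r * I s = if r = s then I r else 0)
    (h2 : ∀ r s : Fin n, m ≤ (r : ℕ) → m ≤ (s : ℕ) →
      I r * I s ∈ Submodule.span ℂ (I '' {k : Fin n | max (r : ℕ) (s : ℕ) < (k : ℕ)}))
    (h3 : ∀ s : Fin n, m ≤ (s : ℕ) → ∃ u : Fin n, (u : ℕ) < m ∧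
      I u * I s = I s ∧ ∀ r : Fin n, (r : ℕ) < m → r ≠ u → I r * I s = 0)
    (a b : Fin n → ℂ) (e₂ e₃ : A)
    (he₂ : e₂ = ∑ r, a r • I r) (he₃ : e₃ = ∑ r, b r • I r)
    (x y z : ℝ) :
    ¬ IsUnit ((x : ℂ) • (1 : A) + (y : ℂ) • e₂ + (z : ℂ) • e₃) ↔
      ∃ u : Fin n, (u : ℕ) < m ∧
        x + y * (a u).re + z * (b u).re = 0 ∧
        y * (a u).im + z * (b u).im = 0 := by
  set ζ : A := (x : ℂ) • (1 : A) + (y : ℂ) • e₂ + (z : ℂ) • e₃ with hζ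
  set Nj : ℕ → Submodule ℂ A :=
    fun j => Submodule.span ℂ (I '' {k : Fin n | j ≤ (k : ℕ)}) with hNj
  have hmemN : ∀ j, ∀ k : Fin n, j ≤ (k : ℕ) → I k ∈ Nj j := by
    intro j k hk
    exact Submodule.subset_span ⟨k, hk, rfl⟩
  have hNmono : ∀ j j' : ℕ, j ≤ j' → Nj j' ≤ Nj j := by
    intro j j' h
    exact Submodule.span_mono (Set.image_mono (fun k hk => le_trans h hk))
  -- products of basis elements with a generator of N stay in N
  have hmulGen : ∀ r s : Fin n, m ≤ (s : ℕ) → I r * I s ∈ Nj m := by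
    intro r s hs
    by_cases hr : (r : ℕ) < m
    · obtain ⟨u, hu, hus, hothers⟩ := h3 s hs
      by_cases hru : r = u
      · rw [hru, hus]; exact hmemN m s hs
      · rw [hothers r hr hru]; exact zero_mem _
    · have hsub : Submodule.span ℂ (I '' {k : Fin n | max (r : ℕ) (s : ℕ) < (k : ℕ)}) ≤ Nj m := by
        refine Submodule.span_mono (Set.image_mono ?_)
        intro k hk
        have : m ≤ max (r : ℕ) (s : ℕ) := le_trans hs (le_max_right _ _)
        exact le_of_lt (lt_of_le_of_lt this hk)
      exact hsub (h2 r s (le_of_not_gt hr) hs)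
  have hmulN : ∀ r : Fin n, ∀ v ∈ Nj m, I r * v ∈ Nj m := by
    intro r v hv
    refine Submodule.span_induction ?_ (by simp) ?_ ?_ hv
    · rintro w ⟨s, hs, rfl⟩
      exact hmulGen r s hs
    · intro u v _ _ hu hv
      rw [mul_add]; exact add_mem hu hv
    · intro cc w _ hw
      rw [mul_smul_comm]; exact Submodule.smul_mem _ _ hw
  have hmulA : ∀ w : A, ∀ v ∈ Nj m, w * v ∈ Nj m := by
    intro w v hv
    rw [← Module.Basis.sum_repr bI w, Finset.sum_mul]
    refine Submodule.sum_mem _ (fun k _ => ?_)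
    rw [smul_mul_assoc, hbI]
    exact Submodule.smul_mem _ _ (hmulN k v hv)
  -- squaring increases the grade
  have hsq : ∀ j, m ≤ j → ∀ v w : A, v ∈ Nj j → w ∈ Nj j → v * w ∈ Nj (j + 1) := by
    intro j hj v w hv hw
    have hle : Nj j * Nj j ≤ Nj (j + 1) := by
      simp only [hNj]
      rw [Submodule.span_mul_span]
      refine Submodule.span_le.2 ?_
      rintro t ⟨t1, ⟨r, hr, rfl⟩, t2, ⟨s, hs, rfl⟩, rfl⟩
      have hsub : Submodule.span ℂ (I '' {k : Fin n | max (r : ℕ) (s : ℕ) < (k : ℕ)}) ≤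
          Submodule.span ℂ (I '' {k : Fin n | j + 1 ≤ (k : ℕ)}) := by
        refine Submodule.span_mono (Set.image_mono ?_)
        intro k hk
        have h' : j ≤ max (r : ℕ) (s : ℕ) := le_trans hr (le_max_left _ _)
        exact lt_of_le_of_lt h' hk
      exact hsub (h2 r s (le_trans hj hr) (le_trans hj hs))
    exact hle (Submodule.mul_mem_mul hv hw)
  have hnil : ∀ v ∈ Nj m, IsNilpotent v := by
    intro v hv
    have key : ∀ t : ℕ, v ^ (2 ^ t) ∈ Nj (m + t) := by
      intro t
      induction t with
      | zero => simpa using hv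
      | succ t ih =>
        have hpow : v ^ (2 ^ (t + 1)) = v ^ (2 ^ t) * v ^ (2 ^ t) := by
          rw [← pow_add]
          congr 1
          ring
        rw [hpow]
        exact hsq (m + t) (Nat.le_add_right m t) _ _ ih ih
    have h0 : Nj n = ⊥ := by
      have : I '' {k : Fin n | n ≤ (k : ℕ)} = ∅ := by
        ext t
        simp only [Set.mem_image, Set.mem_setOf_eq, Set.mem_empty_iff_false, iff_false]
        rintro ⟨k, hk, -⟩
        exact absurd hk (not_le.2 k.isLt)
      simp only [hNj, this, Submodule.span_empty]
    refine ⟨2 ^ (n - m), ?_⟩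
    have := key (n - m)
    rw [Nat.add_sub_cancel' hmn, h0] at this
    simpa using this
  -- coefficients of elements of N at low indices vanish
  have hrepr0 : ∀ v ∈ Nj m, ∀ u : Fin n, (u : ℕ) < m → bI.repr v u = 0 := by
    intro v hv u hu
    refine Submodule.span_induction ?_ (by simp) ?_ ?_ hv
    · rintro w ⟨k, hk, rfl⟩
      rw [← hbI, bI.repr_self]
      refine Finsupp.single_eq_of_ne ?_
      simp only [Set.mem_setOf_eq] at hk
      rintro rfl
      omega
    · intro v w _ _ hv hw
      rw [map_add, Finsupp.add_apply, hv, hw, add_zero]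
    · intro cc w _ hw
      rw [map_smul, Finsupp.smul_apply, hw, smul_zero]
  have hreprN : ∀ v : A, (∀ k : Fin n, (k : ℕ) < m → bI.repr v k = 0) → v ∈ Nj m := by
    intro v hv
    rw [← Module.Basis.sum_repr bI v]
    refine Submodule.sum_mem _ (fun k _ => ?_)
    by_cases hk : (k : ℕ) < m
    · rw [hv k hk, zero_smul]; exact zero_mem _
    · rw [hbI]
      exact Submodule.smul_mem _ _ (hmemN m k (le_of_not_gt hk))
  have hreprI : ∀ k u : Fin n, bI.repr (I k) u = if k = u then 1 else 0 := by
    intro k u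
    rw [← hbI, bI.repr_self, Finsupp.single_apply]
  -- coefficients of 1 at low indices are 1
  have repr1 : ∀ u : Fin n, (u : ℕ) < m → bI.repr 1 u = 1 := by
    intro u hu
    have hexp : I u = ∑ k, bI.repr 1 k • (I k * I u) := by
      conv_lhs => rw [← one_mul (I u), ← Module.Basis.sum_repr bI 1]
      rw [Finset.sum_mul]
      refine Finset.sum_congr rfl fun k _ => ?_
      rw [smul_mul_assoc, hbI]
    have happ : bI.repr (I u) u = ∑ k, bI.repr 1 k * bI.repr (I k * I u) u := by
      conv_lhs => rw [hexp]
      rw [map_sum, Finset.sum_apply']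
      refine Finset.sum_congr rfl fun k _ => ?_
      rw [map_smul, Finsupp.smul_apply, smul_eq_mul]
    have hL : bI.repr (I u) u = 1 := by rw [hreprI u u, if_pos rfl]
    have hterm : ∀ k : Fin n, k ≠ u → bI.repr 1 k * bI.repr (I k * I u) u = 0 := by
      intro k hk
      by_cases hkm : (k : ℕ) < m
      · rw [h1 k u hkm hu, if_neg hk, map_zero, Finsupp.coe_zero, Pi.zero_apply, mul_zero]
      · have hmem : I k * I u ∈ Nj m := by
          rw [mul_comm]
          exact hmulN u (I k) (hmemN m k (le_of_not_gt hkm))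
        rw [hrepr0 _ hmem u hu, mul_zero]
    have hsum : ∑ k, bI.repr 1 k * bI.repr (I k * I u) u
        = bI.repr 1 u * bI.repr (I u * I u) u := by
      refine Finset.sum_eq_single u (fun k _ hk => hterm k hk) (by simp)
    have hmain : bI.repr (I u) u = bI.repr 1 u * bI.repr (I u * I u) u := happ.trans hsum
    have hiu : bI.repr (I u * I u) u = 1 := by
      rw [h1 u u hu hu, if_pos rfl, hreprI u u, if_pos rfl]
    rw [hL, hiu, mul_one] at hmain
    exact hmain.symm
  set S : Finset (Fin n) := Finset.univ.filter (fun u : Fin n => (u : ℕ) < m) with hS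
  have hone : (1 : A) - ∑ u ∈ S, I u ∈ Nj m := by
    refine hreprN _ (fun k hk => ?_)
    rw [map_sub, Finsupp.sub_apply]
    have hk2 : bI.repr (∑ u ∈ S, I u) k = 1 := by
      rw [map_sum, Finset.sum_apply']
      have : ∀ u ∈ S, bI.repr (I u) k = if u = k then 1 else 0 := fun u _ => hreprI u k
      rw [Finset.sum_congr rfl this, Finset.sum_ite_eq' S k (fun _ => (1 : ℂ))]
      rw [if_pos (by simp [hS, hk])]
    rw [repr1 k hk, hk2, sub_self]
  -- the key congruence:  ζ * I u ≡ c u • I u  mod N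
  set c : Fin n → ℂ := fun u => (x : ℂ) + (y : ℂ) * a u + (z : ℂ) * b u with hc
  have hgen : ∀ (d : Fin n → ℂ) (e : A), e = ∑ r, d r • I r →
      ∀ u : Fin n, (u : ℕ) < m → e * I u - d u • I u ∈ Nj m := by
    intro d e he u hu
    have hd : d u • I u = ∑ r, (if r = u then d u • I u else 0) := by simp
    rw [he, Finset.sum_mul, hd, ← Finset.sum_sub_distrib]
    refine Submodule.sum_mem _ (fun r _ => ?_)
    rw [smul_mul_assoc]
    by_cases hr : (r : ℕ) < m
    · rw [h1 r u hr hu]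
      by_cases hru : r = u
      · subst hru; simp
      · simp [hru]
    · have hru : r ≠ u := by rintro rfl; omega
      rw [if_neg hru, sub_zero]
      refine Submodule.smul_mem _ _ ?_
      rw [mul_comm]
      exact hmulN u (I r) (hmemN m r (le_of_not_gt hr))
  have hkey : ∀ u : Fin n, (u : ℕ) < m → ζ * I u - c u • I u ∈ Nj m := by
    intro u hu
    have he2u := hgen a e₂ he₂ u hu
    have he3u := hgen b e₃ he₃ u hu
    have hrw : ζ * I u - c u • I u
        = (y : ℂ) • (e₂ * I u - a u • I u) + (z : ℂ) • (e₃ * I u - b u • I u) := by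
      rw [hζ, hc]
      simp only [add_mul, smul_mul_assoc, one_mul, smul_sub, add_smul, smul_smul]
      abel
    rw [hrw]
    exact add_mem (Submodule.smul_mem _ _ he2u) (Submodule.smul_mem _ _ he3u)
  have hcu : ∀ u : Fin n,
      (x + y * (a u).re + z * (b u).re = 0 ∧ y * (a u).im + z * (b u).im = 0) ↔ c u = 0 := by
    intro u
    rw [hc]
    simp only [Complex.ext_iff, Complex.add_re, Complex.add_im, Complex.mul_re, Complex.mul_im,
      Complex.ofReal_re, Complex.ofReal_im, Complex.zero_re, Complex.zero_im, zero_mul, sub_zero,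
      add_zero, zero_add]
  constructor
  · intro hnu
    by_contra hne
    apply hnu
    have hcne : ∀ u : Fin n, (u : ℕ) < m → c u ≠ 0 := by
      intro u hu hc0
      exact hne ⟨u, hu, (hcu u).2 hc0⟩
    set w : A := ∑ u ∈ S, (c u)⁻¹ • I u with hw
    have h1' : ζ * w - ∑ u ∈ S, I u ∈ Nj m := by
      rw [hw, Finset.mul_sum, ← Finset.sum_sub_distrib]
      refine Submodule.sum_mem _ (fun u hu => ?_)
      have hu' : (u : ℕ) < m := (Finset.mem_filter.1 hu).2
      have hstep : ζ * ((c u)⁻¹ • I u) - I u = (c u)⁻¹ • (ζ * I u - c u • I u) := by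
        rw [smul_sub, mul_smul_comm, smul_smul, inv_mul_cancel₀ (hcne u hu'), one_smul]
      rw [hstep]
      exact Submodule.smul_mem _ _ (hkey u hu')
    have hmem2 : ζ * w - 1 ∈ Nj m := by
      have heq : ζ * w - 1 = (ζ * w - ∑ u ∈ S, I u) - ((1 : A) - ∑ u ∈ S, I u) := by ring
      rw [heq]
      exact sub_mem h1' hone
    have hun : IsUnit (ζ * w) := by
      have : ζ * w = 1 - (-(ζ * w - 1)) := by ring
      rw [this]
      exact IsNilpotent.isUnit_one_sub ((hnil _ hmem2).neg)
    exact isUnit_of_mul_isUnit_left hun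
  · rintro ⟨u, hu, heq⟩ hunit
    have hc0 : c u = 0 := (hcu u).1 heq
    have hmem : ζ * I u ∈ Nj m := by
      have := hkey u hu
      rwa [hc0, zero_smul, sub_zero] at this
    obtain ⟨v, hv⟩ := hunit.exists_left_inv
    have hIu : I u ∈ Nj m := by
      have hmem2 : v * (ζ * I u) ∈ Nj m := hmulA v _ hmem
      rwa [← mul_assoc, hv, one_mul] at hmem2
    have := hrepr0 _ hIu u hu
    rw [hreprI u u, if_pos rfl] at this
    exact one_ne_zero this
end
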